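/- The maps t ↦ α_t and t ↦ γ_t from [0,1) to the bounded operators on ℓ²(ℕ×ℤ) are continuous with respect to the operator norm (in particular they are norm-continuous at t = 0). -/

import Mathlib

/-- `ℓ²(ℕ×ℤ)`: the Hilbert space of square-summable complex families indexed by `ℕ × ℤ`. -/
noncomputable abbrev l2NZ : Type := lp (fun _ : ℕ × ℤ => ℂ) 2

/-- The standard orthonormal basis vectors `e_{n,k}` of `ℓ²(ℕ×ℤ)`. -/
noncomputable def eNZ (n : ℕ) (k : ℤ) : l2NZ := lp.single 2 (n, k) (1 : ℂ)

/-- The defining property of the operators `α_t, γ_t` on `ℓ²(ℕ×ℤ)`: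
`α_t e_{n,k} = √(1−t^{2n}) e_{n−1,k−1}` for `n ≥ 1`, `α_t e_{0,k} = 0`, and
`γ_t e_{n,k} = tⁿ e_{n,k−1}` (with the convention `0⁰ = 1`, so at `t = 0` this reads
`α₀ e_{n,k} = e_{n−1,k−1}` for `n ≥ 1`, `α₀ e_{0,k} = 0`, `γ₀ e_{0,k} = e_{0,k−1}`,
`γ₀ e_{n,k} = 0` for `n ≥ 1`). -/
def IsAlphaGamma (t : ℝ) (α γ : l2NZ →L[ℂ] l2NZ) : Prop :=
  (∀ (n : ℕ) (k : ℤ),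
    α (eNZ (n + 1) k) = (Real.sqrt (1 - t ^ (2 * (n + 1))) : ℂ) • eNZ n (k - 1)) ∧
  (∀ k : ℤ, α (eNZ 0 k) = 0) ∧
  (∀ (n : ℕ) (k : ℤ), γ (eNZ n k) = ((t ^ n : ℝ) : ℂ) • eNZ n (k - 1))

open scoped ENNReal

/-- `lp.single` as a scalar multiple of a basis vector. -/
lemma single_eq_smul_eNZ (i : ℕ × ℤ) (c : ℂ) :
    lp.single 2 i c = c • eNZ i.1 i.2 := by
  have : c • eNZ i.1 i.2 = lp.single 2 (i.1, i.2) (c • (1 : ℂ)) := by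
    rw [eNZ, lp.single_smul]
  rw [this, smul_eq_mul, mul_one]

/-- Key norm bound: an operator acting as a weighted (injectively re-indexed) shift on the
standard basis, with weights bounded by `C`, has operator norm at most `C`. -/
lemma opNorm_le_of_shift (T : l2NZ →L[ℂ] l2NZ) (σ : ℕ × ℤ → ℕ × ℤ)
    (hσ : Function.Injective σ) (d : ℕ × ℤ → ℝ) (C : ℝ) (hC : 0 ≤ C)
    (hd : ∀ j, |d j| ≤ C)
    (hT : ∀ j : ℕ × ℤ, T (eNZ (σ j).1 (σ j).2) = ((d j : ℝ) : ℂ) • eNZ j.1 j.2)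
    (hT0 : ∀ i ∉ Set.range σ, T (eNZ i.1 i.2) = 0) :
    ‖T‖ ≤ C := by
  have h2 : (0 : ℝ) < (2 : ℝ≥0∞).toReal := by norm_num
  refine T.opNorm_le_bound hC ?_
  intro x
  -- the candidate image
  set y : ℕ × ℤ → ℂ := fun j => (d j : ℂ) * x (σ j) with hy_def
  have hxsum : Summable (fun i : ℕ × ℤ => ‖x i‖ ^ (2 : ℝ≥0∞).toReal) :=
    (lp.memℓp x).summable h2
  have hxsumσ : Summable (fun j : ℕ × ℤ => ‖x (σ j)‖ ^ (2 : ℝ≥0∞).toReal) :=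
    hxsum.comp_injective hσ
  have hnorm_y : ∀ j, ‖y j‖ = |d j| * ‖x (σ j)‖ := by
    intro j
    simp [hy_def, Complex.norm_real]
  have hy_le : ∀ j, ‖y j‖ ^ (2 : ℝ≥0∞).toReal ≤ C ^ 2 * ‖x (σ j)‖ ^ (2 : ℝ≥0∞).toReal := by
    intro j
    have h1 : ‖y j‖ ≤ C * ‖x (σ j)‖ := by
      rw [hnorm_y j]
      exact mul_le_mul_of_nonneg_right (hd j) (norm_nonneg _)
    have h0 : (0:ℝ) ≤ ‖y j‖ := norm_nonneg _
    simp only [ENNReal.toReal_ofNat, Real.rpow_two]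
    nlinarith [norm_nonneg (x (σ j)), sq_nonneg (C * ‖x (σ j)‖)]
  have hysum : Summable (fun j : ℕ × ℤ => ‖y j‖ ^ (2 : ℝ≥0∞).toReal) := by
    refine Summable.of_nonneg_of_le (fun j => ?_) hy_le ?_
    · positivity
    · exact hxsumσ.mul_left _
  have hy_mem : Memℓp y 2 := memℓp_gen hysum
  set Y : l2NZ := ⟨y, hy_mem⟩ with hY_def
  -- T x = Y
  have hx : HasSum (fun i : ℕ × ℤ => lp.single 2 i (x i)) x :=
    lp.hasSum_single (by norm_num) x
  have hTx : HasSum (fun i : ℕ × ℤ => x i • T (eNZ i.1 i.2)) (T x) := by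
    have := hx.mapL T
    refine this.congr_fun ?_ -- adjust term shape
    intro i
    rw [single_eq_smul_eNZ, map_smul]
  have hvanish : ∀ i ∉ Set.range σ, x i • T (eNZ i.1 i.2) = 0 := by
    intro i hi
    rw [hT0 i hi, smul_zero]
  have hTxσ : HasSum (fun j : ℕ × ℤ => x (σ j) • T (eNZ (σ j).1 (σ j).2)) (T x) :=
    (hσ.hasSum_iff hvanish).mpr hTx
  have hterm : ∀ j : ℕ × ℤ, x (σ j) • T (eNZ (σ j).1 (σ j).2) = lp.single 2 j (y j) := by
    intro j
    rw [hT j, single_eq_smul_eNZ, smul_smul, hy_def, mul_comm]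
  have hTxσ' : HasSum (fun j : ℕ × ℤ => lp.single 2 j (y j)) (T x) := by
    refine hTxσ.congr_fun (fun j => (hterm j).symm)
  have hYsum : HasSum (fun j : ℕ × ℤ => lp.single 2 j (y j)) Y :=
    lp.hasSum_single (by norm_num) Y
  have hTY : T x = Y := hTxσ'.unique hYsum
  rw [hTY]
  -- now the norm estimate
  refine lp.norm_le_of_tsum_le h2 (mul_nonneg hC (norm_nonneg x)) ?_
  have step1 : ∑' j, ‖Y j‖ ^ (2 : ℝ≥0∞).toReal
      ≤ ∑' j, C ^ 2 * ‖x (σ j)‖ ^ (2 : ℝ≥0∞).toReal := by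
    refine Summable.tsum_le_tsum hy_le hysum (hxsumσ.mul_left _)
  have step2 : ∑' j, C ^ 2 * ‖x (σ j)‖ ^ (2 : ℝ≥0∞).toReal
      = C ^ 2 * ∑' j, ‖x (σ j)‖ ^ (2 : ℝ≥0∞).toReal := tsum_mul_left
  have step3 : ∑' j, ‖x (σ j)‖ ^ (2 : ℝ≥0∞).toReal
      ≤ ∑' i, ‖x i‖ ^ (2 : ℝ≥0∞).toReal := by
    exact tsum_comp_le_tsum_of_inj hxsum (fun i => by positivity) hσ
  have step4 : ∑' i, ‖x i‖ ^ (2 : ℝ≥0∞).toReal = ‖x‖ ^ (2 : ℝ≥0∞).toReal :=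
    (lp.norm_rpow_eq_tsum h2 x).symm
  have hfin : ∑' j, ‖Y j‖ ^ (2 : ℝ≥0∞).toReal ≤ C ^ 2 * ‖x‖ ^ (2 : ℝ≥0∞).toReal := by
    calc ∑' j, ‖Y j‖ ^ (2 : ℝ≥0∞).toReal
        ≤ C ^ 2 * ∑' j, ‖x (σ j)‖ ^ (2 : ℝ≥0∞).toReal := by rw [← step2]; exact step1
      _ ≤ C ^ 2 * ∑' i, ‖x i‖ ^ (2 : ℝ≥0∞).toReal := by
          exact mul_le_mul_of_nonneg_left step3 (by positivity)
      _ = C ^ 2 * ‖x‖ ^ (2 : ℝ≥0∞).toReal := by rw [step4]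
  refine hfin.trans_eq ?_
  simp only [ENNReal.toReal_ofNat, Real.rpow_two]
  ring

/-- Geometric sum bound. -/
lemma geom_sum_le_inv {r : ℝ} (hr0 : 0 ≤ r) (hr1 : r < 1) (n : ℕ) :
    ∑ i ∈ Finset.range n, r ^ i ≤ (1 - r)⁻¹ := by
  refine le_trans (Summable.sum_le_tsum (Finset.range n) (fun i _ => pow_nonneg hr0 i)
    (summable_geometric_of_lt_one hr0 hr1)) ?_
  exact (tsum_geometric_of_lt_one hr0 hr1).le

/-- Local Lipschitz bound for `tⁿ`. -/
lemma pow_diff_le {r t s : ℝ} (ht0 : 0 ≤ t) (htr : t ≤ r) (hs0 : 0 ≤ s) (hsr : s ≤ r)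
    (hr1 : r < 1) (n : ℕ) : |t ^ n - s ^ n| ≤ (1 - r)⁻¹ * |t - s| := by
  have hr0 : 0 ≤ r := le_trans ht0 htr
  have hgs := geom_sum₂_mul t s n
  rw [← hgs, abs_mul]
  refine mul_le_mul_of_nonneg_right ?_ (abs_nonneg _)
  calc |∑ i ∈ Finset.range n, t ^ i * s ^ (n - 1 - i)|
      ≤ ∑ i ∈ Finset.range n, |t ^ i * s ^ (n - 1 - i)| :=
        Finset.abs_sum_le_sum_abs _ _
    _ ≤ ∑ i ∈ Finset.range n, r ^ i := by
        refine Finset.sum_le_sum (fun i _ => ?_)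
        rw [abs_mul, abs_pow, abs_pow, abs_of_nonneg ht0, abs_of_nonneg hs0]
        have h1 : t ^ i ≤ r ^ i := pow_le_pow_left₀ ht0 htr i
        have h2 : s ^ (n - 1 - i) ≤ 1 := pow_le_one₀ hs0 (le_trans hsr hr1.le)
        have h3 : 0 ≤ t ^ i := pow_nonneg ht0 i
        have h4 : 0 ≤ s ^ (n - 1 - i) := pow_nonneg hs0 _
        nlinarith
    _ ≤ (1 - r)⁻¹ := geom_sum_le_inv hr0 hr1 n

/-- Quantitative continuity for the square root away from `0`. -/
lemma sqrt_diff_le {a b m : ℝ} (hb : 0 ≤ b) (hm : 0 < m) (hma : m ^ 2 ≤ a) :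
    |Real.sqrt a - Real.sqrt b| ≤ |a - b| / m := by
  have ha : 0 ≤ a := le_trans (sq_nonneg m) hma
  have h1 : Real.sqrt a * Real.sqrt a = a := Real.mul_self_sqrt ha
  have h2 : Real.sqrt b * Real.sqrt b = b := Real.mul_self_sqrt hb
  have h3 : m ≤ Real.sqrt a := (Real.le_sqrt' hm).mpr hma
  have h4 : 0 ≤ Real.sqrt b := Real.sqrt_nonneg b
  have key : |Real.sqrt a - Real.sqrt b| * m ≤ |a - b| := by
    have e1 : (Real.sqrt a - Real.sqrt b) * (Real.sqrt a + Real.sqrt b) = a - b := by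
      nlinarith
    have e2 : |Real.sqrt a - Real.sqrt b| * (Real.sqrt a + Real.sqrt b) = |a - b| := by
      rw [← e1, abs_mul, abs_of_nonneg (by linarith : (0:ℝ) ≤ Real.sqrt a + Real.sqrt b)]
    have e3 : |Real.sqrt a - Real.sqrt b| * m
        ≤ |Real.sqrt a - Real.sqrt b| * (Real.sqrt a + Real.sqrt b) := by
      refine mul_le_mul_of_nonneg_left (by linarith) (abs_nonneg _)
    linarith
  rw [le_div_iff₀ hm]
  exact key

/-- Continuity within a set from a local linear bound. -/
lemma cwa_of_bound {E : Type*} [NormedAddCommGroup E] (F : ℝ → E) (s : Set ℝ) (t₀ : ℝ)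
    (K δ₀ : ℝ) (hδ₀ : 0 < δ₀)
    (hb : ∀ t ∈ s, |t - t₀| < δ₀ → ‖F t - F t₀‖ ≤ K * |t - t₀|) :
    ContinuousWithinAt F s t₀ := by
  rw [Metric.continuousWithinAt_iff]
  intro ε hε
  refine ⟨min δ₀ (ε / (|K| + 1)), lt_min hδ₀ (div_pos hε (by positivity)), ?_⟩
  intro t ht hdist
  rw [Real.dist_eq] at hdist
  have h1 : |t - t₀| < δ₀ := lt_of_lt_of_le hdist (min_le_left _ _)
  have h2 : |t - t₀| < ε / (|K| + 1) := lt_of_lt_of_le hdist (min_le_right _ _)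
  have h3 := hb t ht h1
  have h4 : (|K| + 1) * |t - t₀| < ε := by
    rw [div_eq_inv_mul] at h2
    have hpos : (0:ℝ) < |K| + 1 := by positivity
    calc (|K| + 1) * |t - t₀| < (|K| + 1) * ((|K| + 1)⁻¹ * ε) :=
          mul_lt_mul_of_pos_left h2 hpos
      _ = ε := by field_simp
  have h5 : K * |t - t₀| ≤ |K| * |t - t₀| :=
    mul_le_mul_of_nonneg_right (le_abs_self K) (abs_nonneg _)
  rw [dist_eq_norm]
  have h6 : |K| * |t - t₀| ≤ (|K| + 1) * |t - t₀| :=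
    mul_le_mul_of_nonneg_right (by linarith) (abs_nonneg _)
  linarith

/-- **Statement 10.** The maps `t ↦ α_t` and `t ↦ γ_t` from `[0,1)` to the bounded
operators on `ℓ²(ℕ×ℤ)` are continuous in the operator norm (in particular, norm-continuous
at `t = 0`). -/
theorem alphaGamma_norm_continuous
    (A G : ℝ → (l2NZ →L[ℂ] l2NZ))
    (h : ∀ t ∈ Set.Ico (0 : ℝ) 1, IsAlphaGamma t (A t) (G t)) :
    ContinuousOn A (Set.Ico (0 : ℝ) 1) ∧ ContinuousOn G (Set.Ico (0 : ℝ) 1) := by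
  constructor
  · -- continuity of α
    intro t₀ ht₀
    obtain ⟨ht₀0, ht₀1⟩ := ht₀
    set r : ℝ := (1 + t₀) / 2 with hr_def
    have hr0 : 0 ≤ r := by positivity
    have hr1 : r < 1 := by rw [hr_def]; linarith
    have ht₀r : t₀ ≤ r := by rw [hr_def]; linarith
    have hm2 : (0:ℝ) < 1 - r ^ 2 := by nlinarith
    set m : ℝ := Real.sqrt (1 - r ^ 2) with hm_def
    have hm : 0 < m := Real.sqrt_pos.mpr hm2
    set K : ℝ := (1 - r)⁻¹ / m with hK_def
    have hK0 : 0 ≤ K := by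
      rw [hK_def]
      have : (0:ℝ) ≤ (1 - r)⁻¹ := inv_nonneg.mpr (by linarith)
      positivity
    refine cwa_of_bound A _ t₀ K ((1 - t₀) / 2) (by linarith) ?_
    intro t ht hδ
    obtain ⟨ht0, ht1⟩ := ht
    have htr : t ≤ r := by
      have := abs_lt.mp hδ
      rw [hr_def]; linarith [this.2]
    -- apply the key lemma to T := A t - A t₀
    refine opNorm_le_of_shift (A t - A t₀) (fun j => (j.1 + 1, j.2 + 1))
      (fun a b hab => by
        simp only [Prod.mk.injEq] at hab
        exact Prod.ext (by omega) (by omega))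
      (fun j => Real.sqrt (1 - t ^ (2 * (j.1 + 1))) - Real.sqrt (1 - t₀ ^ (2 * (j.1 + 1))))
      (K * |t - t₀|) (mul_nonneg hK0 (abs_nonneg _)) ?_ ?_ ?_
    · -- coefficient bound
      intro j
      set N : ℕ := 2 * (j.1 + 1) with hN_def
      have hN2 : 2 ≤ N := by omega
      have hb : 0 ≤ 1 - t₀ ^ N := by
        have : t₀ ^ N ≤ 1 := pow_le_one₀ ht₀0 ht₀1.le
        linarith
      have hma : m ^ 2 ≤ 1 - t ^ N := by
        have h1 : t ^ N ≤ r ^ N := pow_le_pow_left₀ ht0 htr N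
        have h2 : r ^ N ≤ r ^ 2 := pow_le_pow_of_le_one hr0 hr1.le hN2
        have h3 : m ^ 2 = 1 - r ^ 2 := Real.sq_sqrt hm2.le
        linarith
      have hd1 := sqrt_diff_le hb hm hma
      have hd2 : |(1 - t ^ N) - (1 - t₀ ^ N)| = |t ^ N - t₀ ^ N| := by
        rw [← abs_neg]; ring_nf
      have hd3 : |t ^ N - t₀ ^ N| ≤ (1 - r)⁻¹ * |t - t₀| :=
        pow_diff_le ht0 htr ht₀0 ht₀r hr1 N
      calc |Real.sqrt (1 - t ^ N) - Real.sqrt (1 - t₀ ^ N)|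
          ≤ |(1 - t ^ N) - (1 - t₀ ^ N)| / m := hd1
        _ = |t ^ N - t₀ ^ N| / m := by rw [hd2]
        _ ≤ ((1 - r)⁻¹ * |t - t₀|) / m := by gcongr
        _ = K * |t - t₀| := by rw [hK_def]; ring
    · -- action on basis vectors in the range
      intro j
      have hA1 := (h t ⟨ht0, ht1⟩).1 j.1 (j.2 + 1)
      have hA2 := (h t₀ ⟨ht₀0, ht₀1⟩).1 j.1 (j.2 + 1)
      have hk : (j.2 + 1 - 1 : ℤ) = j.2 := by ring
      rw [hk] at hA1 hA2
      rw [ContinuousLinearMap.sub_apply, hA1, hA2, ← sub_smul]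
      push_cast
      ring_nf
    · -- vanishing off the range
      intro i hi
      have hi0 : i.1 = 0 := by
        by_contra hne
        obtain ⟨n, hn⟩ := Nat.exists_eq_succ_of_ne_zero hne
        exact hi ⟨(n, i.2 - 1), by
          refine Prod.ext ?_ ?_
          · simp [hn]
          · simp⟩
      have hA1 := (h t ⟨ht0, ht1⟩).2.1 i.2
      have hA2 := (h t₀ ⟨ht₀0, ht₀1⟩).2.1 i.2
      rw [ContinuousLinearMap.sub_apply, hi0, hA1, hA2, sub_zero]
  · -- continuity of γ
    intro t₀ ht₀
    obtain ⟨ht₀0, ht₀1⟩ := ht₀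
    set r : ℝ := (1 + t₀) / 2 with hr_def
    have hr0 : 0 ≤ r := by positivity
    have hr1 : r < 1 := by rw [hr_def]; linarith
    have ht₀r : t₀ ≤ r := by rw [hr_def]; linarith
    set K : ℝ := (1 - r)⁻¹ with hK_def
    have hK0 : 0 ≤ K := by
      rw [hK_def]; exact inv_nonneg.mpr (by linarith)
    refine cwa_of_bound G _ t₀ K ((1 - t₀) / 2) (by linarith) ?_
    intro t ht hδ
    obtain ⟨ht0, ht1⟩ := ht
    have htr : t ≤ r := by
      have := abs_lt.mp hδ
      rw [hr_def]; linarith [this.2]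
    refine opNorm_le_of_shift (G t - G t₀) (fun j => (j.1, j.2 + 1))
      (fun a b hab => by
        simp only [Prod.mk.injEq] at hab
        exact Prod.ext hab.1 (by omega))
      (fun j => t ^ j.1 - t₀ ^ j.1)
      (K * |t - t₀|) (mul_nonneg hK0 (abs_nonneg _)) ?_ ?_ ?_
    · intro j
      have := pow_diff_le ht0 htr ht₀0 ht₀r hr1 j.1
      calc |t ^ j.1 - t₀ ^ j.1| ≤ (1 - r)⁻¹ * |t - t₀| := this
        _ = K * |t - t₀| := by rw [hK_def]
    · intro j
      have hG1 := (h t ⟨ht0, ht1⟩).2.2 j.1 (j.2 + 1)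
      have hG2 := (h t₀ ⟨ht₀0, ht₀1⟩).2.2 j.1 (j.2 + 1)
      have hk : (j.2 + 1 - 1 : ℤ) = j.2 := by ring
      rw [hk] at hG1 hG2
      rw [ContinuousLinearMap.sub_apply, hG1, hG2, ← sub_smul]
      push_cast
      ring_nf
    · intro i hi
      exact absurd ⟨(i.1, i.2 - 1), by
        refine Prod.ext rfl ?_
        simp⟩ hi
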